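/- arXiv:1602.05688 — 6 statements merged into one kernel-verified Lean document; each statement's English description precedes it below -/
import Mathlib

section
/- Let k be an algebraically closed field, let E and F be finite-dimensional k-vector spaces, and let x_F : F → F and x_E : E → E be linear endomorphisms having no common eigenvalue (i.e. there is no μ ∈ k which is an eigenvalue of both x_F and x_E). Then the linear endomorphism of Hom_k(E, F) given by v ↦ x_F ∘ v − v ∘ x_E is bijective. -/
open Polynomial

/-- If `xF ∘ v = v ∘ xE` then `p(xF) ∘ v = v ∘ p(xE)` for every polynomial `p`. -/
lemma aeval_comm_aux {k : Type*} [Field k]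
    {E F : Type*} [AddCommGroup E] [Module k E] [AddCommGroup F] [Module k F]
    (xF : F →ₗ[k] F) (xE : E →ₗ[k] E) (v : E →ₗ[k] F)
    (hv : xF ∘ₗ v = v ∘ₗ xE) (p : k[X]) :
    (aeval xF p) ∘ₗ v = v ∘ₗ (aeval xE p) := by
  induction p using Polynomial.induction_on' with
  | add p q hp hq =>
    simp [map_add, LinearMap.add_comp, LinearMap.comp_add, hp, hq]
  | monomial n a =>
    have hpow : ∀ n : ℕ, (xF ^ n) ∘ₗ v = v ∘ₗ (xE ^ n) := by
      intro n
      induction n with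
      | zero => simp [Module.End.one_eq_id]
      | succ m ih =>
        rw [pow_succ, pow_succ, Module.End.mul_eq_comp, Module.End.mul_eq_comp,
          LinearMap.comp_assoc, hv, ← LinearMap.comp_assoc, ih, LinearMap.comp_assoc]
    simp only [aeval_monomial]
    ext x
    have := LinearMap.congr_fun (hpow n) x
    simp only [LinearMap.comp_apply, Module.End.mul_apply, Module.algebraMap_end_apply,
      LinearMap.smul_apply, map_smul] at this ⊢
    rw [this]

/-- If no element of `s` is an eigenvalue of `xF`, the evaluation at `xF` of the product
of the corresponding linear factors is injective. -/
lemma prod_factors_injective {k : Type*} [Field k]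
    {F : Type*} [AddCommGroup F] [Module k F]
    (xF : F →ₗ[k] F) (s : Multiset k)
    (hs : ∀ μ ∈ s, ¬ Module.End.HasEigenvalue xF μ) :
    Function.Injective (aeval xF ((s.map (fun a => X - C a)).prod)) := by
  induction s using Multiset.induction_on with
  | empty => simpa [Module.End.one_eq_id] using Function.injective_id
  | cons a s ih =>
    rw [Multiset.map_cons, Multiset.prod_cons, map_mul, Module.End.mul_eq_comp,
      LinearMap.coe_comp]
    refine Function.Injective.comp ?_ (ih fun μ hμ => hs μ (Multiset.mem_cons_of_mem hμ))
    have hμF := hs a (Multiset.mem_cons_self a s)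
    rw [Module.End.hasEigenvalue_iff, not_not, Module.End.eigenspace_def] at hμF
    have heq : aeval xF (X - C a) = xF - a • 1 := by
      simp [Module.algebraMap_end_eq_smul_id, Module.End.one_eq_id]
    rw [heq]
    exact LinearMap.ker_eq_bot.mp hμF

/-- Let `k` be an algebraically closed field, `E`, `F` finite-dimensional
`k`-vector spaces, and `xF : F → F`, `xE : E → E` linear endomorphisms having no common
eigenvalue. Then `v ↦ xF ∘ v - v ∘ xE` is a bijective endomorphism of `Hom_k(E, F)`. -/
theorem stmt0 {k : Type*} [Field k] [IsAlgClosed k]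
    {E F : Type*} [AddCommGroup E] [Module k E] [AddCommGroup F] [Module k F]
    [FiniteDimensional k E] [FiniteDimensional k F]
    (xF : F →ₗ[k] F) (xE : E →ₗ[k] E)
    (h : ∀ μ : k, ¬(Module.End.HasEigenvalue xF μ ∧ Module.End.HasEigenvalue xE μ)) :
    Function.Bijective (fun v : E →ₗ[k] F => xF ∘ₗ v - v ∘ₗ xE) := by
  set T : (E →ₗ[k] F) →ₗ[k] (E →ₗ[k] F) :=
    { toFun := fun v => xF ∘ₗ v - v ∘ₗ xE
      map_add' := by intro a b; ext x; simp; abel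
      map_smul' := by intro c a; ext x; simp [smul_sub] } with hT
  show Function.Bijective T
  rw [Function.Bijective, ← LinearMap.injective_iff_surjective, and_self]
  rw [← LinearMap.ker_eq_bot, LinearMap.ker_eq_bot']
  intro v hv0
  have hv : xF ∘ₗ v = v ∘ₗ xE := by
    have h0 : xF ∘ₗ v - v ∘ₗ xE = 0 := hv0
    rw [sub_eq_zero] at h0
    exact h0
  have hint : IsIntegral k xE := Algebra.IsIntegral.isIntegral xE
  set p := minpoly k xE with hp
  have hmonic : p.Monic := minpoly.monic hint
  have hzero : aeval xE p = 0 := minpoly.aeval k xE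
  have hcomm := aeval_comm_aux xF xE v hv p
  rw [hzero, LinearMap.comp_zero] at hcomm
  have hinj : Function.Injective (aeval xF p) := by
    have hsplit : p.Splits := IsAlgClosed.splits p
    rw [hsplit.eq_prod_roots_of_monic hmonic]
    refine prod_factors_injective xF p.roots fun μ hμ hc => ?_
    have hμE : Module.End.HasEigenvalue xE μ := by
      rw [Module.End.hasEigenvalue_iff_isRoot]
      exact (mem_roots (hmonic.ne_zero)).mp hμ
    exact h μ ⟨hc, hμE⟩
  ext x
  have h1 : (aeval xF p) (v x) = 0 := LinearMap.congr_fun hcomm x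
  have h2 := hinj (a₁ := v x) (a₂ := 0) (by simpa using h1)
  simpa using h2
end

section
/- The k-linear map Hom(E, F_1) × Hom(E, F_{m−1}) → Hom(E, F) given by (v_1, v_{m−1}) ↦ v_1 + v_{m−1} ∘ x_E − x_F ∘ v_{m−1} is a linear isomorphism (here v_1, v_{m−1} and x_F ∘ v_{m−1}, v_{m−1} ∘ x_E are viewed as elements of Hom(E, F) via the inclusions F_1 ⊆ F and F_{m−1} ⊆ F). -/
/-- Let `k` be a field, `F` an `m`-dimensional `k`-vector space (`m ≥ 1`)
with a full flag `0 = F_0 ⊂ F_1 ⊂ ⋯ ⊂ F_m = F` (`dim F_j = j`), and `E` a finite-dimensional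
`k`-vector space.  Let `xF : F → F` satisfy `xF (F_j) ⊆ F_{j+1}` for `1 ≤ j ≤ m-1`, with the
induced maps `F_j/F_{j-1} → F_{j+1}/F_j` isomorphisms (encoded below as: the induced map is
surjective, i.e. `xF(F_j) ⊔ F_j = F_{j+1}`, and injective, i.e. `v ∈ F_j` with `xF v ∈ F_j`
implies `v ∈ F_{j-1}`).  Let `xE : E → E` be arbitrary.  Then the map
`Hom(E, F_1) × Hom(E, F_{m-1}) → Hom(E, F)`,
`(v₁, v_{m-1}) ↦ v₁ + v_{m-1} ∘ xE − xF ∘ v_{m-1}` is a linear isomorphism, where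
`Hom(E, F')` is viewed inside `Hom(E, F)` via the inclusion `F' ⊆ F`. -/
theorem stmt1 {k : Type*} [Field k] {m : ℕ} (hm : 1 ≤ m)
    {E F : Type*} [AddCommGroup E] [Module k E] [AddCommGroup F] [Module k F]
    [FiniteDimensional k E] [FiniteDimensional k F]
    (Fl : ℕ → Submodule k F)
    (hmono : ∀ j, j < m → Fl j ≤ Fl (j + 1))
    (hdim : ∀ j ≤ m, Module.finrank k (Fl j) = j)
    (hbot : Fl 0 = ⊥) (htop : Fl m = ⊤)
    (xF : F →ₗ[k] F) (xE : E →ₗ[k] E)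
    (hmap : ∀ j, 1 ≤ j → j ≤ m - 1 → ∀ v ∈ Fl j, xF v ∈ Fl (j + 1))
    (hsurj : ∀ j, 1 ≤ j → j ≤ m - 1 → (Fl j).map xF ⊔ Fl j = Fl (j + 1))
    (hinj : ∀ j, 1 ≤ j → j ≤ m - 1 → ∀ v ∈ Fl j, xF v ∈ Fl j → v ∈ Fl (j - 1)) :
    Function.Bijective (fun vw : (E →ₗ[k] (Fl 1)) × (E →ₗ[k] (Fl (m - 1))) =>
      (Fl 1).subtype ∘ₗ vw.1 + ((Fl (m - 1)).subtype ∘ₗ vw.2) ∘ₗ xE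
        - xF ∘ₗ ((Fl (m - 1)).subtype ∘ₗ vw.2)) := by
  -- monotonicity of the flag
  have hmono' : ∀ a b, a ≤ b → b ≤ m → Fl a ≤ Fl b := by
    intro a b hab hbm
    induction b with
    | zero => simpa [Nat.le_zero.mp hab] using le_refl (Fl 0)
    | succ n ih =>
      rcases Nat.lt_or_ge a (n + 1) with h | h
      · exact le_trans (ih (Nat.lt_succ_iff.mp h) (le_trans (Nat.le_succ n) hbm))
          (hmono n (Nat.lt_of_lt_of_le (Nat.lt_succ_self n) hbm))
      · have : a = n + 1 := le_antisymm hab h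
        simp [this]
  -- bundle the map as a linear map
  set Φ : ((E →ₗ[k] (Fl 1)) × (E →ₗ[k] (Fl (m - 1)))) →ₗ[k] (E →ₗ[k] F) :=
    { toFun := fun vw =>
        (Fl 1).subtype ∘ₗ vw.1 + ((Fl (m - 1)).subtype ∘ₗ vw.2) ∘ₗ xE
          - xF ∘ₗ ((Fl (m - 1)).subtype ∘ₗ vw.2)
      map_add' := by intro p q; ext e; simp; abel
      map_smul' := by intro c p; ext e; simp [smul_add, smul_sub] } with hΦ
  -- injectivity
  have hinjΦ : Function.Injective Φ := by
    rw [injective_iff_map_eq_zero]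
    rintro ⟨v, w⟩ h0
    have heq : ∀ e : E, xF (w e : F) = (v e : F) + (w (xE e) : F) := by
      intro e
      have h := congrArg (fun f : E →ₗ[k] F => f e) h0
      simp only [hΦ, LinearMap.coe_mk, AddHom.coe_mk, LinearMap.sub_apply, LinearMap.add_apply,
        LinearMap.coe_comp, Function.comp_apply, Submodule.coe_subtype,
        LinearMap.zero_apply] at h
      have h' := sub_eq_zero.mp h
      exact h'.symm
    have hw0 : ∀ i : ℕ, ∀ e : E, (w e : F) ∈ Fl (m - 1 - i) := by
      intro i
      induction i with
      | zero => intro e; simpa using (w e).2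
      | succ n ih =>
        intro e
        rcases Nat.eq_zero_or_pos (m - 1 - n) with h0' | hpos
        · have : m - 1 - (n + 1) = 0 := by omega
          rw [this, ← h0']
          exact ih e
        · set j := m - 1 - n with hj
          have hj1 : 1 ≤ j := hpos
          have hjm : j ≤ m - 1 := by omega
          have hmem : xF (w e : F) ∈ Fl j := by
            rw [heq e]
            exact (Fl j).add_mem (hmono' 1 j hj1 (by omega) (v e).2) (ih (xE e))
          have := hinj j hj1 hjm (w e : F) (ih e) hmem
          have hcast : j - 1 = m - 1 - (n + 1) := by omega
          rwa [hcast] at this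
    have hw : w = 0 := by
      ext e
      have := hw0 (m - 1) e
      rw [Nat.sub_self, hbot] at this
      simpa using this
    have hv : v = 0 := by
      ext e
      have h := heq e
      rw [hw] at h
      simpa using h.symm
    rw [hv, hw]; rfl
  -- equality of dimensions
  have hrank : Module.finrank k ((E →ₗ[k] (Fl 1)) × (E →ₗ[k] (Fl (m - 1))))
      = Module.finrank k (E →ₗ[k] F) := by
    have d1 : Module.finrank k (Fl 1) = 1 := hdim 1 hm
    have d2 : Module.finrank k (Fl (m - 1)) = m - 1 := hdim (m - 1) (Nat.sub_le m 1)
    have dF : Module.finrank k F = m := by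
      rw [← finrank_top k F, ← htop]; exact hdim m le_rfl
    rw [Module.finrank_prod, Module.finrank_linearMap, Module.finrank_linearMap,
      Module.finrank_linearMap, d1, d2, dF]
    have h' : Module.finrank k E * m = Module.finrank k E * (m - 1) + Module.finrank k E := by
      rw [← Nat.mul_succ]; congr 1; omega
    omega
  exact ⟨hinjΦ, (LinearMap.injective_iff_surjective_of_finrank_eq_finrank hrank).mp hinjΦ⟩
end

section
/- The k-linear map Hom(E, F_{m−1}) → Hom(E, F/F_1) sending v to the composition of v ∘ x_E − x_F ∘ v : E → F with the quotient projection F → F/F_1 is a linear isomorphism. -/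
/-- Same setup as Statement 1: `k` a field, `F` an `m`-dimensional
`k`-vector space with a full flag `0 = F_0 ⊂ F_1 ⊂ ⋯ ⊂ F_m = F`, `E` finite-dimensional,
`xF : F → F` with `xF(F_j) ⊆ F_{j+1}` for `1 ≤ j ≤ m-1` inducing isomorphisms
`F_j/F_{j-1} → F_{j+1}/F_j` (encoded via surjectivity `xF(F_j) ⊔ F_j = F_{j+1}` and
injectivity `v ∈ F_j, xF v ∈ F_j ⟹ v ∈ F_{j-1}`), `xE : E → E` arbitrary.  Then the map
`Hom(E, F_{m-1}) → Hom(E, F/F_1)` sending `v` to the composition of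
`v ∘ xE − xF ∘ v : E → F` with the projection `F → F/F_1` is a linear isomorphism. -/
theorem stmt2 {k : Type*} [Field k] {m : ℕ} (hm : 1 ≤ m)
    {E F : Type*} [AddCommGroup E] [Module k E] [AddCommGroup F] [Module k F]
    [FiniteDimensional k E] [FiniteDimensional k F]
    (Fl : ℕ → Submodule k F)
    (hmono : ∀ j, j < m → Fl j ≤ Fl (j + 1))
    (hdim : ∀ j ≤ m, Module.finrank k (Fl j) = j)
    (hbot : Fl 0 = ⊥) (htop : Fl m = ⊤)
    (xF : F →ₗ[k] F) (xE : E →ₗ[k] E)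
    (hmap : ∀ j, 1 ≤ j → j ≤ m - 1 → ∀ v ∈ Fl j, xF v ∈ Fl (j + 1))
    (hsurj : ∀ j, 1 ≤ j → j ≤ m - 1 → (Fl j).map xF ⊔ Fl j = Fl (j + 1))
    (hinj : ∀ j, 1 ≤ j → j ≤ m - 1 → ∀ v ∈ Fl j, xF v ∈ Fl j → v ∈ Fl (j - 1)) :
    Function.Bijective (fun w : E →ₗ[k] (Fl (m - 1)) =>
      (Fl 1).mkQ ∘ₗ (((Fl (m - 1)).subtype ∘ₗ w) ∘ₗ xE
        - xF ∘ₗ ((Fl (m - 1)).subtype ∘ₗ w))) := by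
  have hle : ∀ i j, i ≤ j → j ≤ m → Fl i ≤ Fl j := by
    intro i j hij hjm
    induction j with
    | zero => rw [Nat.le_zero.mp hij]
    | succ j ih =>
      rcases Nat.lt_or_ge i (j+1) with h | h
      · exact le_trans (ih (Nat.lt_succ_iff.mp h) (le_trans (Nat.le_succ j) hjm))
          (hmono j (lt_of_lt_of_le (Nat.lt_succ_self j) hjm))
      · rw [le_antisymm hij h]
  set n := m - 1 with hn
  let Φ : (E →ₗ[k] (Fl n)) →ₗ[k] (E →ₗ[k] (F ⧸ Fl 1)) :=
    { toFun := fun w => (Fl 1).mkQ ∘ₗ (((Fl n).subtype ∘ₗ w) ∘ₗ xE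
        - xF ∘ₗ ((Fl n).subtype ∘ₗ w)),
      map_add' := by
        intro w₁ w₂; ext e
        simp [LinearMap.comp_apply, map_add]
        abel,
      map_smul' := by
        intro c w; ext e
        simp [LinearMap.comp_apply, map_smul]
        module }
  have hinjΦ : Function.Injective Φ := by
    rw [injective_iff_map_eq_zero]
    intro w hw
    have hmem : ∀ e, (↑(w (xE e)) : F) - xF ↑(w e) ∈ Fl 1 := by
      intro e
      have h := LinearMap.congr_fun hw e
      simp only [Φ, LinearMap.coe_mk, AddHom.coe_mk, LinearMap.comp_apply,
        LinearMap.sub_apply, Submodule.coe_subtype, LinearMap.zero_apply,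
        Submodule.mkQ_apply] at h
      rwa [Submodule.Quotient.mk_eq_zero] at h
    have key : ∀ d, ∀ e, (↑(w e) : F) ∈ Fl (n - d) := by
      intro d
      induction d with
      | zero => intro e; simpa using (w e).2
      | succ d ih =>
        intro e
        by_cases h0 : n - d = 0
        · have h1 : n - (d+1) = 0 := by omega
          have h2 := ih e
          rw [h0] at h2; rw [h1]; exact h2
        · have h1 : 1 ≤ n - d := Nat.one_le_iff_ne_zero.mpr h0
          have h2 : n - d ≤ m - 1 := by omega
          have hx : xF ↑(w e) ∈ Fl (n - d) := by
            rw [(sub_sub_cancel (↑(w (xE e)) : F) (xF ↑(w e))).symm]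
            exact Submodule.sub_mem _ (ih (xE e)) (hle 1 (n - d) h1 (by omega) (hmem e))
          have h3 := hinj (n - d) h1 h2 _ (ih e) hx
          have h4 : n - (d+1) = n - d - 1 := by omega
          rw [h4]; exact h3
    ext e
    have h0 := key n e
    rw [Nat.sub_self, hbot, Submodule.mem_bot] at h0
    simpa using h0
  have hrankF : Module.finrank k F = m := by
    have h := hdim m le_rfl
    rw [htop, finrank_top] at h
    exact h
  have hq : Module.finrank k (F ⧸ Fl 1) = m - 1 := by
    have h := Submodule.finrank_quotient_add_finrank (Fl 1)
    have h1 : Module.finrank k (Fl 1) = 1 := hdim 1 hm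
    omega
  have hfr : Module.finrank k (E →ₗ[k] (Fl n)) = Module.finrank k (E →ₗ[k] (F ⧸ Fl 1)) := by
    rw [Module.finrank_linearMap, Module.finrank_linearMap, hdim n (by omega), hq]
  exact ⟨hinjΦ, (LinearMap.injective_iff_surjective_of_finrank_eq_finrank hfr).mp hinjΦ⟩
end

section
/- Let k be a field, let 1 ≤ m ≤ n, let a = (a_1,…,a_m) ∈ k^m, let x_E be an invertible (n−m)×(n−m) matrix over k, and let y be an arbitrary m×(n−m) matrix over k. Then there exist a unique m×(n−m) matrix v_1 all of whose rows except possibly the first are zero, and a unique m×(n−m) matrix w whose last (m-th) row is zero, such that y = v_1 + w·x_E − C(a)·w. -/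
/-- The companion matrix `C(a)` of `a = (a_1, …, a_m)`: it satisfies `C(a) e_j = e_{j+1}`
for `1 ≤ j ≤ m-1` and `C(a) e_m = -a_m e_1 - a_{m-1} e_2 - ⋯ - a_1 e_m` (here `a i`
represents `a_{i+1}` for `i : Fin m`). Its characteristic polynomial is
`t^m + a_1 t^{m-1} + ⋯ + a_m`. -/
def companion {k : Type*} [CommRing k] {m : ℕ} (a : Fin m → k) :
    Matrix (Fin m) (Fin m) k :=
  Matrix.of fun i j =>
    if (j : ℕ) + 1 = m then -a ⟨m - 1 - (i : ℕ), by have := i.isLt; omega⟩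
    else if (i : ℕ) = (j : ℕ) + 1 then 1 else 0

section Aux

variable {k : Type*} [Field k] {m N : ℕ}

/-- The downward recursion defining the rows of `w`, from the bottom up:
`urec 0 = 0` (the last row), and `urec (s+1) = urec s * xE - (row (m-1-s) of y)`. -/
def urec (xE : Matrix (Fin N) (Fin N) k) (y : Fin m → Fin N → k) (hm : 0 < m) :
    ℕ → Fin N → k
  | 0 => 0
  | s + 1 => Matrix.vecMul (urec xE y hm s) xE - y ⟨m - 1 - s, by omega⟩

lemma urec_unique (xE : Matrix (Fin N) (Fin N) k) (y : Fin m → Fin N → k) (hm : 0 < m)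
    (f : Fin m → Fin N → k)
    (hlast : f ⟨m - 1, by omega⟩ = 0)
    (hrec : ∀ (i : Fin m), 1 ≤ (i : ℕ) →
      f ⟨(i : ℕ) - 1, by omega⟩ = Matrix.vecMul (f i) xE - y i) :
    ∀ s, s ≤ m - 1 → f ⟨m - 1 - s, by omega⟩ = urec xE y hm s := by
  intro s
  induction s with
  | zero => intro _; simpa [urec] using hlast
  | succ s ih =>
    intro hs
    have hs' : s ≤ m - 1 := by omega
    have h1 : 1 ≤ m - 1 - s := by omega
    have key := hrec ⟨m - 1 - s, by omega⟩ h1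
    have hidx : (⟨m - 1 - s - 1, by omega⟩ : Fin m) = ⟨m - 1 - (s + 1), by omega⟩ := by
      simp only [Fin.mk.injEq]; omega
    rw [hidx] at key
    rw [key, ih hs']
    rfl

/-- For `w` whose last row vanishes, `companion a * w` is `w` shifted down one row. -/
lemma companion_mul_apply (a : Fin m → k) (w : Matrix (Fin m) (Fin N) k) (hm : 0 < m)
    (hlast : ∀ j, w ⟨m - 1, by omega⟩ j = 0) (i : Fin m) (j : Fin N) :
    (companion a * w) i j =
      if h : (i : ℕ) = 0 then 0 else w ⟨(i : ℕ) - 1, by omega⟩ j := by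
  rw [Matrix.mul_apply]
  split
  · next h0 =>
    apply Finset.sum_eq_zero
    intro l _
    by_cases hl : (l : ℕ) + 1 = m
    · have hlv : (l : ℕ) = m - 1 := by omega
      have : l = ⟨m - 1, by omega⟩ := Fin.ext hlv
      rw [this, hlast]
      ring
    · simp [companion, hl, h0]
  · next h0 =>
    have hi : (i : ℕ) - 1 < m := by omega
    rw [Finset.sum_eq_single (⟨(i : ℕ) - 1, hi⟩ : Fin m)]
    · have hcond : ¬ ((i : ℕ) - 1 + 1 = m) := by have := i.isLt; omega
      have hcond2 : (i : ℕ) = (i : ℕ) - 1 + 1 := by omega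
      show (if (i : ℕ) - 1 + 1 = m then _ else if (i : ℕ) = (i : ℕ) - 1 + 1 then 1 else 0)
        * w ⟨(i : ℕ) - 1, hi⟩ j = w ⟨(i : ℕ) - 1, hi⟩ j
      rw [if_neg hcond, if_pos hcond2, one_mul]
    · intro l _ hl
      by_cases hlm : (l : ℕ) + 1 = m
      · have hlv : (l : ℕ) = m - 1 := by omega
        have : l = ⟨m - 1, by omega⟩ := Fin.ext hlv
        rw [this, hlast]
        ring
      · have hil : ¬ ((i : ℕ) = (l : ℕ) + 1) := by
          intro habs
          apply hl
          apply Fin.ext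
          show (l : ℕ) = (i : ℕ) - 1
          omega
        show (if (l : ℕ) + 1 = m then _ else if (i : ℕ) = (l : ℕ) + 1 then 1 else 0)
          * w l j = 0
        rw [if_neg hlm, if_neg hil, zero_mul]
    · intro h; exact absurd (Finset.mem_univ _) h

end Aux

/-- Let `k` be a field, `1 ≤ m ≤ n`, `a ∈ k^m`, `xE` an invertible
`(n-m)×(n-m)` matrix and `y` an arbitrary `m×(n-m)` matrix.  Then there exist a unique
`m×(n-m)` matrix `v₁` all of whose rows except possibly the first vanish, and a unique
`m×(n-m)` matrix `w` whose last row vanishes, with `y = v₁ + w·xE − C(a)·w`. -/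
theorem stmt3 {k : Type*} [Field k] {m n : ℕ} (hm : 1 ≤ m) (hmn : m ≤ n)
    (a : Fin m → k) (xE : Matrix (Fin (n - m)) (Fin (n - m)) k) (hxE : IsUnit xE)
    (y : Matrix (Fin m) (Fin (n - m)) k) :
    ∃! vw : Matrix (Fin m) (Fin (n - m)) k × Matrix (Fin m) (Fin (n - m)) k,
      (∀ (i : Fin m) (j : Fin (n - m)), (i : ℕ) ≠ 0 → vw.1 i j = 0) ∧
      (∀ (i : Fin m) (j : Fin (n - m)), (i : ℕ) = m - 1 → vw.2 i j = 0) ∧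
      y = vw.1 + vw.2 * xE - companion a * vw.2 := by
  have hm0 : 0 < m := hm
  set w : Matrix (Fin m) (Fin (n - m)) k :=
    Matrix.of fun i j => urec xE (fun i => y i) hm0 (m - 1 - (i : ℕ)) j with hw
  have hwrow : ∀ i : Fin m, w i = urec xE (fun i => y i) hm0 (m - 1 - (i : ℕ)) := by
    intro i; rfl
  have hwlast : ∀ j, w ⟨m - 1, by omega⟩ j = 0 := by
    intro j
    show urec xE (fun i => y i) hm0 (m - 1 - (m - 1)) j = 0
    rw [Nat.sub_self]
    rfl
  -- the recursion satisfied by w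
  have hwrec : ∀ (i : Fin m), 1 ≤ (i : ℕ) →
      w ⟨(i : ℕ) - 1, by omega⟩ = Matrix.vecMul (w i) xE - y i := by
    intro i h1
    have h2 : (i : ℕ) ≤ m - 1 := by have := i.isLt; omega
    have e1 : m - 1 - ((i : ℕ) - 1) = (m - 1 - (i : ℕ)) + 1 := by omega
    rw [hwrow, hwrow, e1]
    show Matrix.vecMul _ xE - (fun i => y i) ⟨m - 1 - (m - 1 - (i:ℕ)), _⟩ = _
    have e2 : (⟨m - 1 - (m - 1 - (i:ℕ)), by omega⟩ : Fin m) = i := by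
      apply Fin.ext; show m - 1 - (m - 1 - (i:ℕ)) = (i : ℕ); omega
    rw [e2]
  set v : Matrix (Fin m) (Fin (n - m)) k := y - w * xE + companion a * w with hv
  have hmulwx : ∀ (i : Fin m) (j : Fin (n - m)),
      (w * xE) i j = Matrix.vecMul (w i) xE j := by
    intro i j
    simp [Matrix.mul_apply, Matrix.vecMul, dotProduct]
  refine ⟨(v, w), ⟨?_, ?_, ?_⟩, ?_⟩
  · -- rows of v other than the first vanish
    intro i j hi
    have hc := companion_mul_apply a w hm0 hwlast i j
    rw [dif_neg hi] at hc
    have hrec := hwrec i (by omega)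
    have : w ⟨(i : ℕ) - 1, by omega⟩ j = Matrix.vecMul (w i) xE j - y i j := by
      rw [hrec]; rfl
    simp only [hv, Matrix.add_apply, Matrix.sub_apply]
    rw [hc, this, hmulwx]
    ring
  · -- last row of w vanishes
    intro i j hi
    have : i = ⟨m - 1, by omega⟩ := by simp only [Fin.ext_iff]; omega
    rw [this]; exact hwlast j
  · -- the equation
    simp only [hv]; abel
  · -- uniqueness
    rintro ⟨v', w'⟩ ⟨hv', hw', heq⟩
    have hw'last : w' ⟨m - 1, by omega⟩ = 0 := by
      funext j; exact hw' _ j (by simp)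
    have hw'rec : ∀ (i : Fin m), 1 ≤ (i : ℕ) →
        w' ⟨(i : ℕ) - 1, by omega⟩ = Matrix.vecMul (w' i) xE - y i := by
      intro i h1
      funext j
      have heqij := congrArg (fun M => M i j) heq
      simp only [Matrix.add_apply, Matrix.sub_apply] at heqij
      have hc := companion_mul_apply a w' hm0 (fun j => by
        have := congrFun hw'last j; simpa using this) i j
      rw [dif_neg (by omega)] at hc
      have hv'0 : v' i j = 0 := hv' i j (by omega)
      have hmulw'x : (w' * xE) i j = Matrix.vecMul (w' i) xE j := by
        simp [Matrix.mul_apply, Matrix.vecMul, dotProduct]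
      rw [hc, hv'0, hmulw'x] at heqij
      show w' ⟨(i : ℕ) - 1, by omega⟩ j = Matrix.vecMul (w' i) xE j - y i j
      linear_combination heqij
    have hww : w' = w := by
      funext i j
      have hs : m - 1 - (i : ℕ) ≤ m - 1 := by omega
      have key := urec_unique xE (fun i => y i) hm0 (fun i => w' i)
        (by funext j; exact congrFun hw'last j) hw'rec (m - 1 - (i : ℕ)) hs
      have e : (⟨m - 1 - (m - 1 - (i : ℕ)), by omega⟩ : Fin m) = i := by
        apply Fin.ext; show m - 1 - (m - 1 - (i : ℕ)) = (i : ℕ)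
        have := i.isLt; omega
      rw [e] at key
      rw [hwrow]
      exact congrFun key j
    have hvv : v' = v := by
      rw [hv, ← hww]
      have : v' = y - w' * xE + companion a * w' := by
        rw [heq]; abel
      rw [this]
    exact Prod.ext hvv hww
end

section
/- Let k be a field (or more generally a commutative ring), m ≥ 1, a = (a_1,…,a_m) ∈ k^m and v = (v_1,…,v_{m−1}) ∈ k^{m−1}. Then the characteristic polynomial of the product u(v)·C(a) equals t^m + b_1 t^{m−1} + ⋯ + b_{m−1} t + b_m, where b_m = a_m and b_r = a_r + Σ_{i=1}^{r−1} a_i v_{r−i} + v_r for 1 ≤ r ≤ m−1. -/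
/-- For `v = (v_1, …, v_{m-1}) ∈ k^{m-1}` (here `v j` represents `v_{j+1}` for
`j : Fin (m-1)`), `uNeg v` is the `m×m` matrix equal to the identity except that its
first row is `(1, -v_1, …, -v_{m-1})`. -/
def uNeg {k : Type*} [CommRing k] {m : ℕ} (v : Fin (m - 1) → k) :
    Matrix (Fin m) (Fin m) k :=
  Matrix.of fun i j =>
    if i = j then 1
    else if (i : ℕ) = 0 then
      (if h : 1 ≤ (j : ℕ) then -v ⟨(j : ℕ) - 1, by have := j.isLt; omega⟩ else 0)
    else 0

section Aux
open Polynomial Matrix Finset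

variable {k : Type*} [CommRing k]

noncomputable def qpoly (a : ℕ → k) (d : ℕ) : k[X] :=
  X ^ d + ∑ r ∈ Finset.range d, C (a r) * X ^ (d - 1 - r)

lemma qpoly_zero (a : ℕ → k) : qpoly a 0 = 1 := by simp [qpoly]

lemma qpoly_succ (a : ℕ → k) (d : ℕ) :
    qpoly a (d + 1) = X * qpoly a d + C (a d) := by
  unfold qpoly
  rw [Finset.sum_range_succ, mul_add, Finset.mul_sum]
  have h1 : (X : k[X]) * X ^ d = X ^ (d+1) := by ring
  have h2 : ∀ r ∈ Finset.range d, (X : k[X]) * (C (a r) * X ^ (d - 1 - r))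
      = C (a r) * X ^ (d + 1 - 1 - r) := by
    intro r hr
    rw [Finset.mem_range] at hr
    have : d + 1 - 1 - r = (d - 1 - r) + 1 := by omega
    rw [this, pow_succ]
    ring
  rw [Finset.sum_congr rfl h2, h1]
  simp [add_assoc, add_comm, add_left_comm]

noncomputable def Tmat (m : ℕ) (p : Fin m → k[X]) (a : ℕ → k) : Matrix (Fin m) (Fin m) k[X] :=
  Matrix.of fun i j =>
    if (i : ℕ) = 0 then p j
    else (if (i : ℕ) = (j : ℕ) then X else 0) -
      ((if (j : ℕ) + 1 = m then -C (a (m - 1 - (i : ℕ))) else 0)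
        + (if ((j : ℕ) + 1 ≠ m ∧ (i : ℕ) = (j : ℕ) + 1) then 1 else 0))

lemma Tmat_sub0 (n : ℕ) (p : Fin (n+1+1) → k[X]) (a : ℕ → k) :
    (Tmat (n+1+1) p a).submatrix (Fin.succAbove 0) Fin.succ
      = Tmat (n+1) (fun j => (if (j : ℕ) = 0 then X else 0)
          + (if (j : ℕ) + 1 = n + 1 then C (a n) else 0)) a := by
  apply Matrix.ext
  intro i j
  simp only [Matrix.submatrix_apply, Fin.succAbove_zero, Tmat, Matrix.of_apply, Fin.val_succ]
  rw [if_neg (by omega : ¬ (i:ℕ) + 1 = 0)]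
  rcases Nat.eq_zero_or_pos (i : ℕ) with h0 | h0
  · rw [if_pos h0]
    rw [show n + 1 + 1 - 1 - ((i:ℕ) + 1) = n from by omega]
    split_ifs <;> first | omega | ring
  · rw [if_neg (by omega : ¬ (i:ℕ) = 0)]
    rw [show n + 1 + 1 - 1 - ((i:ℕ) + 1) = n + 1 - 1 - (i:ℕ) from by omega]
    have e1 : ((i:ℕ)+1 = (j:ℕ)+1) ↔ ((i:ℕ) = (j:ℕ)) := by omega
    have e2 : ((j:ℕ)+1+1 = n+1+1) ↔ ((j:ℕ)+1 = n+1) := by omega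
    have e3 : ((j:ℕ)+1+1 ≠ n+1+1 ∧ (i:ℕ)+1 = (j:ℕ)+1+1)
        ↔ ((j:ℕ)+1 ≠ n+1 ∧ (i:ℕ) = (j:ℕ)+1) := by omega
    rw [if_congr e1 rfl rfl, if_congr e2 rfl rfl, if_congr e3 rfl rfl]

lemma Tmat_sub1 (n : ℕ) (p : Fin (n+1+1) → k[X]) (a : ℕ → k) :
    (Tmat (n+1+1) p a).submatrix (Fin.succAbove 1) Fin.succ
      = Tmat (n+1) (fun j => p j.succ) a := by
  apply Matrix.ext
  intro i j
  rcases Nat.eq_zero_or_pos (i : ℕ) with h0 | h0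
  · have hi : i = 0 := Fin.ext h0
    subst hi
    have hsa : Fin.succAbove 1 (0 : Fin (n+1)) = (0 : Fin (n+1+1)) := by
      rw [Fin.succAbove_of_castSucc_lt]
      · rfl
      · simp [Fin.lt_def]
    rw [Matrix.submatrix_apply, hsa]
    simp [Tmat]
  · have hsa : Fin.succAbove 1 i = Fin.succ i := by
      rw [Fin.succAbove_of_le_castSucc]
      simp [Fin.le_def]
      omega
    rw [Matrix.submatrix_apply, hsa]
    simp only [Tmat, Matrix.of_apply, Fin.val_succ]
    rw [if_neg (by omega : ¬ (i:ℕ) + 1 = 0), if_neg (by omega : ¬ (i:ℕ) = 0)]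
    rw [show n + 1 + 1 - 1 - ((i:ℕ) + 1) = n + 1 - 1 - (i:ℕ) from by omega]
    have e1 : ((i:ℕ)+1 = (j:ℕ)+1) ↔ ((i:ℕ) = (j:ℕ)) := by omega
    have e2 : ((j:ℕ)+1+1 = n+1+1) ↔ ((j:ℕ)+1 = n+1) := by omega
    have e3 : ((j:ℕ)+1+1 ≠ n+1+1 ∧ (i:ℕ)+1 = (j:ℕ)+1+1)
        ↔ ((j:ℕ)+1 ≠ n+1 ∧ (i:ℕ) = (j:ℕ)+1) := by omega
    rw [if_congr e1 rfl rfl, if_congr e2 rfl rfl, if_congr e3 rfl rfl]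

lemma Tmat_det : ∀ (m : ℕ) (p : Fin (m+1) → k[X]) (a : ℕ → k),
    (Tmat (m+1) p a).det = ∑ i : Fin (m+1), p i * qpoly a (m - (i : ℕ)) := by
  intro m
  induction m with
  | zero =>
    intro p a
    rw [Matrix.det_fin_one]
    simp [Tmat, qpoly_zero]
  | succ n ih =>
    intro p a
    rw [Matrix.det_succ_column_zero, Fin.sum_univ_succ, Fin.sum_univ_succ]
    have hrest : ∀ i : Fin n,
        (-1 : k[X]) ^ (((i.succ.succ : Fin (n+1+1))) : ℕ) * (Tmat (n+1+1) p a) i.succ.succ 0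
          * ((Tmat (n+1+1) p a).submatrix (Fin.succAbove i.succ.succ) Fin.succ).det = 0 := by
      intro i
      have hz : (Tmat (n+1+1) p a) i.succ.succ 0 = 0 := by
        simp only [Tmat, Matrix.of_apply, Fin.val_succ, Fin.val_zero]
        simp
      rw [hz]; ring
    rw [Finset.sum_congr rfl (fun i _ => hrest i), Finset.sum_const_zero, add_zero]
    have h00 : (Tmat (n+1+1) p a) 0 0 = p 0 := by simp [Tmat]
    have h10 : (Tmat (n+1+1) p a) (Fin.succ 0) 0 = -1 := by
      simp only [Tmat, Matrix.of_apply, Fin.val_succ, Fin.val_zero]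
      simp
    rw [h00, h10]
    rw [show (Fin.succ 0 : Fin (n+1+1)).succAbove = Fin.succAbove 1 by
      rw [Fin.succ_zero_eq_one]]
    rw [show (Fin.succAbove (0 : Fin (n+1+1))) = Fin.succAbove 0 from rfl]
    rw [Tmat_sub0, Tmat_sub1, ih, ih]
    have hsum1 : (∑ i : Fin (n+1), ((if (i:ℕ) = 0 then (X:k[X]) else 0)
          + (if (i:ℕ) + 1 = n + 1 then C (a n) else 0)) * qpoly a (n - (i:ℕ)))
        = X * qpoly a n + C (a n) := by
      simp only [add_mul]
      rw [Finset.sum_add_distrib]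
      congr 1
      · rw [Finset.sum_eq_single (0 : Fin (n+1))]
        · simp
        · intro b _ hb
          rw [if_neg (show ¬ (b:ℕ) = 0 from fun h => hb (Fin.ext h)), zero_mul]
        · simp
      · rw [Finset.sum_eq_single (Fin.last n)]
        · simp [Fin.last, qpoly_zero]
        · intro b _ hb
          rw [if_neg (by simpa [Fin.ext_iff] using hb), zero_mul]
        · simp
    rw [hsum1, Fin.sum_univ_succ (f := fun i : Fin (n+1+1) => p i * qpoly a (n + 1 - (i:ℕ)))]
    have hsum2 : (∑ i : Fin (n+1), p i.succ * qpoly a (n + 1 - ((i.succ : Fin (n+1+1)):ℕ)))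
        = ∑ i : Fin (n+1), p i.succ * qpoly a (n - (i:ℕ)) := by
      apply Finset.sum_congr rfl
      intro i _
      congr 1
      rw [Fin.val_succ]
      congr 1
      omega
    rw [hsum2, ← qpoly_succ]
    simp

lemma tri {M : Type*} [AddCommMonoid M] (N : ℕ) (f : ℕ → ℕ → M) :
    ∑ t ∈ range N, ∑ r ∈ range (N - 1 - t), f t r
      = ∑ s ∈ range N, ∑ i ∈ range s, f (s - 1 - i) i := by
  rw [Finset.sum_sigma', Finset.sum_sigma']
  refine Finset.sum_nbij' (fun x => ⟨x.1 + x.2 + 1, x.2⟩) (fun x => ⟨x.1 - 1 - x.2, x.2⟩)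
    ?_ ?_ ?_ ?_ ?_
  · rintro ⟨t, r⟩ h
    simp only [Finset.mem_sigma, Finset.mem_range] at h ⊢
    omega
  · rintro ⟨s, i⟩ h
    simp only [Finset.mem_sigma, Finset.mem_range] at h ⊢
    omega
  · rintro ⟨t, r⟩ h
    simp only [Finset.mem_sigma, Finset.mem_range] at h
    show (⟨t + r + 1 - 1 - r, r⟩ : Σ _ : ℕ, ℕ) = ⟨t, r⟩
    have : t + r + 1 - 1 - r = t := by omega
    rw [this]
  · rintro ⟨s, i⟩ h
    simp only [Finset.mem_sigma, Finset.mem_range] at h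
    show (⟨s - 1 - i + i + 1, i⟩ : Σ _ : ℕ, ℕ) = ⟨s, i⟩
    have : s - 1 - i + i + 1 = s := by omega
    rw [this]
  · rintro ⟨t, r⟩ h
    simp only [Finset.mem_sigma, Finset.mem_range] at h
    simp only
    congr 1
    omega

lemma finalSum (n : ℕ) (aN vN : ℕ → k) :
    ∑ t ∈ range (n+1), ((if t = 0 then (X:k[X]) else 0)
        + C (if t + 1 = n + 1 then aN n - ∑ l ∈ range n, vN l * aN (n - 1 - l) else vN t))
        * qpoly aN (n - t)
    = X ^ (n+1) + ∑ t ∈ range (n+1),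
        C (if t + 1 = n + 1 then aN t
           else aN t + (∑ i ∈ range t, aN i * vN (t - 1 - i)) + vN t) * X ^ (n - t) := by
  simp only [add_mul]
  rw [Finset.sum_add_distrib]
  have h1 : ∑ t ∈ range (n+1), (if t = 0 then (X:k[X]) else 0) * qpoly aN (n - t)
      = X * qpoly aN n := by
    rw [Finset.sum_eq_single 0]
    · simp
    · intro b _ hb; rw [if_neg hb, zero_mul]
    · intro h; exact absurd (Finset.mem_range.2 (by omega)) h
  have h2 : ∑ t ∈ range (n+1),
        C (if t + 1 = n + 1 then aN n - ∑ l ∈ range n, vN l * aN (n-1-l) else vN t)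
          * qpoly aN (n - t)
      = (∑ t ∈ range n, C (vN t) * qpoly aN (n - t)) + C (aN n)
          - C (∑ l ∈ range n, vN l * aN (n-1-l)) := by
    rw [Finset.sum_range_succ, if_pos rfl, Nat.sub_self, qpoly_zero, mul_one, map_sub]
    have e : ∀ t ∈ range n,
        C (if t + 1 = n + 1 then aN n - ∑ l ∈ range n, vN l * aN (n-1-l) else vN t)
          * qpoly aN (n - t) = C (vN t) * qpoly aN (n - t) := by
      intro t ht
      simp only [mem_range] at ht
      rw [if_neg (by omega)]
    rw [Finset.sum_congr rfl e]
    ring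
  have h3 : (X : k[X]) * qpoly aN n = X^(n+1) + ∑ t ∈ range n, C (aN t) * X^(n - t) := by
    unfold qpoly
    rw [mul_add, Finset.mul_sum, ← pow_succ']
    congr 1
    apply Finset.sum_congr rfl
    intro t ht
    simp only [mem_range] at ht
    rw [show n - t = (n - 1 - t) + 1 from by omega, pow_succ]
    ring
  have h4 : ∑ t ∈ range n, C (vN t) * qpoly aN (n - t)
      = ∑ t ∈ range n, C (vN t) * X^(n - t)
        + ((∑ t ∈ range n, C (∑ i ∈ range t, aN i * vN (t - 1 - i)) * X^(n - t))
           + C (∑ l ∈ range n, vN l * aN (n - 1 - l))) := by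
    have e : ∀ t ∈ range n, C (vN t) * qpoly aN (n - t)
        = C (vN t) * X^(n-t) + ((∑ r ∈ range (n - 1 - t), C (vN t * aN r) * X^(n - t - 1 - r))
            + C (vN t * aN (n - 1 - t))) := by
      intro t ht
      simp only [mem_range] at ht
      unfold qpoly
      rw [mul_add]
      congr 1
      rw [show n - t = (n - 1 - t) + 1 from by omega, Finset.sum_range_succ, mul_add,
        Finset.mul_sum]
      refine congrArg₂ (· + ·) ?_ ?_
      · apply Finset.sum_congr rfl
        intro r hr
        rw [C_mul]
        ring
      · rw [show (n-1-t) + 1 - 1 - (n-1-t) = 0 from by omega, pow_zero, mul_one, C_mul]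
    rw [Finset.sum_congr rfl e, Finset.sum_add_distrib]
    congr 1
    rw [Finset.sum_add_distrib]
    congr 1
    · rw [tri n (fun t r => C (vN t * aN r) * X^(n - t - 1 - r))]
      apply Finset.sum_congr rfl
      intro s hs
      simp only [mem_range] at hs
      rw [map_sum C (fun i => aN i * vN (s - 1 - i)) (range s), Finset.sum_mul]
      apply Finset.sum_congr rfl
      intro i hi
      simp only [mem_range] at hi
      rw [show n - (s - 1 - i) - 1 - i = n - s from by omega, mul_comm (aN i)]
    · rw [map_sum C (fun l => vN l * aN (n - 1 - l)) (range n)]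
  rw [h1, h2, h3, h4]
  rw [Finset.sum_range_succ, if_pos rfl, Nat.sub_self, pow_zero, mul_one]
  have e5 : ∀ t ∈ range n,
      C (if t + 1 = n + 1 then aN t
         else aN t + (∑ i ∈ range t, aN i * vN (t - 1 - i)) + vN t) * X ^ (n - t)
      = C (aN t) * X ^ (n - t) + C (∑ i ∈ range t, aN i * vN (t - 1 - i)) * X ^ (n - t)
          + C (vN t) * X ^ (n - t) := by
    intro t ht
    simp only [mem_range] at ht
    rw [if_neg (by omega), map_add, map_add]
    ring
  rw [Finset.sum_congr rfl e5, Finset.sum_add_distrib, Finset.sum_add_distrib]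
  ring

end Aux
/-- Let `k` be a commutative ring, `m ≥ 1`, `a = (a_1,…,a_m) ∈ k^m` and
`v = (v_1,…,v_{m-1}) ∈ k^{m-1}`.  Then the characteristic polynomial of `u(v)·C(a)` equals
`t^m + b_1 t^{m-1} + ⋯ + b_{m-1} t + b_m`, where `b_m = a_m` and
`b_r = a_r + Σ_{i=1}^{r-1} a_i v_{r-i} + v_r` for `1 ≤ r ≤ m-1`
(below `r : Fin m` encodes the index `r+1`, so `b_{r+1}` multiplies `t^{m-1-r}`). -/
theorem stmt6 {k : Type*} [CommRing k] {m : ℕ} (hm : 1 ≤ m)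
    (a : Fin m → k) (v : Fin (m - 1) → k) :
    (uNeg v * companion a).charpoly =
      Polynomial.X ^ m + ∑ r : Fin m, Polynomial.C
        (if h : (r : ℕ) + 1 = m then a r
         else a r
           + (∑ i : Fin (r : ℕ), a ⟨(i : ℕ), by have := i.isLt; have := r.isLt; omega⟩
               * v ⟨(r : ℕ) - 1 - (i : ℕ), by have := i.isLt; have := r.isLt; omega⟩)
           + v ⟨(r : ℕ), by have := r.isLt; omega⟩)
        * Polynomial.X ^ (m - 1 - (r : ℕ)) := by
  classical
  open Polynomial Matrix Finset in
  obtain ⟨n, rfl⟩ : ∃ n, m = n + 1 := ⟨m - 1, by omega⟩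
  set aN : ℕ → k := fun t => if h : t < n + 1 then a ⟨t, h⟩ else 0 with haN
  set vN : ℕ → k := fun t => if h : t < n then v ⟨t, by omega⟩ else 0 with hvN
  have haNa : ∀ (t : ℕ) (h : t < n + 1), aN t = a ⟨t, h⟩ := fun t h => dif_pos h
  have hvNv : ∀ (t : ℕ) (h : t < n), vN t = v ⟨t, by omega⟩ := fun t h => dif_pos h
  set F : ℕ → k[X] := fun t => (if t = 0 then (X : k[X]) else 0)
    + C (if t + 1 = n + 1 then aN n - ∑ l ∈ Finset.range n, vN l * aN (n - 1 - l)
         else vN t) with hF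
  -- the entries of the product
  have hP : ∀ i j : Fin (n+1), (uNeg v * companion a) i j =
      if (i : ℕ) = 0 then
        (if (j : ℕ) + 1 = n + 1
          then -aN n + ∑ l ∈ Finset.range n, vN l * aN (n - 1 - l)
          else -vN (j : ℕ))
      else (if (j : ℕ) + 1 = n + 1 then -aN (n + 1 - 1 - (i : ℕ))
            else if (i : ℕ) = (j : ℕ) + 1 then 1 else 0) := by
    intro i j
    rw [Matrix.mul_apply]
    rcases Nat.eq_zero_or_pos (i : ℕ) with h0 | h0
    · rw [if_pos h0]
      have hUe : ∀ l : Fin (n+1), uNeg v i l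
          = (if (l : ℕ) = 0 then (1:k) else -vN ((l : ℕ) - 1)) := by
        intro l
        simp only [uNeg, Matrix.of_apply]
        by_cases hl : (l : ℕ) = 0
        · rw [if_pos (show i = l from Fin.ext (by omega)), if_pos hl]
        · rw [if_neg (show ¬ i = l by rw [Fin.ext_iff]; omega), if_pos h0,
            dif_pos (by omega : 1 ≤ (l : ℕ)), if_neg hl,
            hvNv ((l : ℕ) - 1) (by have := l.isLt; omega)]
      by_cases hj : (j : ℕ) + 1 = n + 1
      · rw [if_pos hj]
        have hCe : ∀ l : Fin (n+1), companion a l j = -aN (n + 1 - 1 - (l : ℕ)) := by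
          intro l
          simp only [companion, Matrix.of_apply]
          rw [if_pos hj, haNa (n + 1 - 1 - (l : ℕ)) (by have := l.isLt; omega)]
        calc ∑ l : Fin (n+1), uNeg v i l * companion a l j
            = ∑ l : Fin (n+1), (fun t => (if t = 0 then (1:k) else -vN (t - 1))
                * -aN (n + 1 - 1 - t)) (l : ℕ) :=
              Finset.sum_congr rfl (fun l _ => by rw [hUe l, hCe l])
          _ = ∑ t ∈ Finset.range (n+1), (if t = 0 then (1:k) else -vN (t - 1))
                * -aN (n + 1 - 1 - t) := by
              exact Fin.sum_univ_eq_sum_range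
                (fun t => (if t = 0 then (1:k) else -vN (t - 1)) * -aN (n + 1 - 1 - t)) (n+1)
          _ = _ := by
              rw [Finset.sum_range_succ']
              have e0 : (if 0 = 0 then (1:k) else -vN (0 - 1)) * -aN (n + 1 - 1 - 0)
                  = -aN n := by
                rw [if_pos rfl, show n + 1 - 1 - 0 = n from by omega]; ring
              have e1 : ∀ t ∈ Finset.range n,
                  (if t + 1 = 0 then (1:k) else -vN (t + 1 - 1)) * -aN (n + 1 - 1 - (t + 1))
                    = vN t * aN (n - 1 - t) := by
                intro t ht
                rw [if_neg (by omega), show t + 1 - 1 = t from by omega,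
                  show n + 1 - 1 - (t + 1) = n - 1 - t from by omega]
                ring
              rw [e0, Finset.sum_congr rfl e1]
              ring
      · rw [if_neg hj]
        have hCe : ∀ l : Fin (n+1), companion a l j
            = (if (l : ℕ) = (j : ℕ) + 1 then (1:k) else 0) := by
          intro l
          simp only [companion, Matrix.of_apply]
          rw [if_neg hj]
        calc ∑ l : Fin (n+1), uNeg v i l * companion a l j
            = ∑ l : Fin (n+1), (fun t => (if t = 0 then (1:k) else -vN (t - 1))
                * (if t = (j : ℕ) + 1 then (1:k) else 0)) (l : ℕ) :=
              Finset.sum_congr rfl (fun l _ => by rw [hUe l, hCe l])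
          _ = ∑ t ∈ Finset.range (n+1), (if t = 0 then (1:k) else -vN (t - 1))
                * (if t = (j : ℕ) + 1 then (1:k) else 0) := by
              exact Fin.sum_univ_eq_sum_range
                (fun t => (if t = 0 then (1:k) else -vN (t - 1))
                  * (if t = (j : ℕ) + 1 then (1:k) else 0)) (n+1)
          _ = _ := by
              rw [Finset.sum_eq_single ((j : ℕ) + 1)]
              · rw [if_neg (by omega), if_pos rfl, show (j : ℕ) + 1 - 1 = (j : ℕ) from by omega]
                ring
              · intro b _ hb
                rw [if_neg hb, mul_zero]
              · intro hmem
                exact absurd (Finset.mem_range.2 (by have := j.isLt; omega)) hmem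
    · rw [if_neg (by omega)]
      rw [Finset.sum_eq_single i]
      · have hu : uNeg v i i = 1 := by
          simp only [uNeg, Matrix.of_apply]
          exact if_pos trivial
        rw [hu, one_mul]
        simp only [companion, Matrix.of_apply]
        by_cases hj : (j : ℕ) + 1 = n + 1
        · rw [if_pos hj, if_pos hj, haNa (n + 1 - 1 - (i : ℕ)) (by have := i.isLt; omega)]
        · rw [if_neg hj, if_neg hj]
      · intro b _ hb
        have hu : uNeg v i b = 0 := by
          simp only [uNeg, Matrix.of_apply]
          rw [if_neg (fun h => hb h.symm), if_neg (by omega)]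
        rw [hu, zero_mul]
      · intro h
        exact absurd (Finset.mem_univ i) h
  -- identification of the charmatrix with Tmat
  have key : charmatrix (uNeg v * companion a)
      = Tmat (n+1) (fun j : Fin (n+1) => F (j : ℕ)) aN := by
    apply Matrix.ext
    intro i j
    rw [charmatrix_apply, Matrix.diagonal_apply, hP]
    simp only [Tmat, Matrix.of_apply]
    rcases Nat.eq_zero_or_pos (i : ℕ) with h0 | h0
    · rw [if_pos h0, if_pos h0, hF]
      beta_reduce
      have e1 : (i = j) ↔ ((j : ℕ) = 0) := by rw [Fin.ext_iff, h0]; omega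
      rw [if_congr e1 rfl rfl]
      split_ifs <;> simp only [map_add, map_neg, map_sub] <;> ring
    · rw [if_neg (show ¬ (i : ℕ) = 0 from by omega),
        if_neg (show ¬ (i : ℕ) = 0 from by omega)]
      have e1 : (i = j) ↔ ((i : ℕ) = (j : ℕ)) := Fin.ext_iff
      rw [if_congr e1 rfl rfl]
      by_cases hc : (j : ℕ) + 1 = n + 1
      · rw [if_pos hc, if_pos hc,
          if_neg (show ¬ ((j:ℕ)+1 ≠ n+1 ∧ (i:ℕ) = (j:ℕ)+1) from by simp [hc]),
          map_neg, add_zero]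
      · rw [if_neg hc, if_neg hc]
        by_cases hc2 : (i : ℕ) = (j : ℕ) + 1
        · rw [if_pos hc2, if_pos (⟨hc, hc2⟩ : (j:ℕ)+1 ≠ n+1 ∧ (i:ℕ) = (j:ℕ)+1),
            Polynomial.C_1, zero_add]
        · rw [if_neg hc2,
            if_neg (show ¬ ((j:ℕ)+1 ≠ n+1 ∧ (i:ℕ) = (j:ℕ)+1) from fun h => hc2 h.2),
            Polynomial.C_0, zero_add]
  -- apply the determinant formula
  rw [Matrix.charpoly, key, Tmat_det]
  rw [Fin.sum_univ_eq_sum_range (fun t => F t * qpoly aN (n - t)) (n+1)]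
  rw [finalSum n aN vN]
  -- identify the right-hand side
  congr 1
  rw [← Fin.sum_univ_eq_sum_range
    (fun t => C (if t + 1 = n + 1 then aN t
      else aN t + (∑ i ∈ Finset.range t, aN i * vN (t - 1 - i)) + vN t)
      * (X : k[X]) ^ (n - t)) (n+1)]
  apply Finset.sum_congr rfl
  intro r _
  beta_reduce
  rw [show n - (r : ℕ) = n + 1 - 1 - (r : ℕ) from by omega]
  congr 1
  by_cases hc : (r : ℕ) + 1 = n + 1
  · rw [if_pos hc, dif_pos hc]
    rw [haNa (r : ℕ) r.isLt]
  · rw [if_neg hc, dif_neg hc]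
    have hrn : (r : ℕ) < n := by have := r.isLt; omega
    have h3 : (∑ i ∈ Finset.range (r : ℕ), aN i * vN ((r : ℕ) - 1 - i))
        = ∑ i : Fin (r : ℕ), a ⟨(i : ℕ), by have := i.isLt; have := r.isLt; omega⟩
            * v ⟨(r : ℕ) - 1 - (i : ℕ), by have := i.isLt; have := r.isLt; omega⟩ := by
      rw [← Fin.sum_univ_eq_sum_range (fun t => aN t * vN ((r : ℕ) - 1 - t)) (r : ℕ)]
      apply Finset.sum_congr rfl
      intro i _
      beta_reduce
      rw [haNa (i : ℕ) (by have := i.isLt; have := r.isLt; omega),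
        hvNv ((r : ℕ) - 1 - (i : ℕ)) (by omega)]
    rw [h3, haNa (r : ℕ) r.isLt, hvNv (r : ℕ) hrn]
end

section
/- Let k be an algebraically closed field and n ≥ 1. Let Q_1 = {g ∈ GL_n(k) : g e_1 = e_1} (the subgroup fixing the first standard basis vector). Then for every monic polynomial p ∈ k[t] of degree n with nonzero constant term, the action of Q_1 by conjugation on the set {x ∈ GL_n(k) : charpoly(x) = p} has only finitely many orbits; equivalently, there is a finite subset S of GL_n(k) such that every x ∈ GL_n(k) with charpoly(x) = p equals g x_0 g^{−1} for some g ∈ Q_1 and some x_0 ∈ S. -/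
open Polynomial Module DirectSum

noncomputable section StmtTwelve

namespace Stmt12Aux

/-- Multiplication by an invertible element as a linear equivalence. -/
def mulUnitEquiv {R A : Type*} [CommRing R] [CommRing A] [Algebra R A] (u w : A)
    (h : u * w = 1) : A ≃ₗ[R] A :=
  LinearEquiv.ofLinear (LinearMap.mulLeft R u) (LinearMap.mulLeft R w)
    (by ext z; simp [← mul_assoc, h])
    (by ext z; simp [← mul_assoc, mul_comm w u, h])

lemma subsingleton_quot_of_isUnit {R : Type*} [CommRing R] {a : R} (h : IsUnit a) :
    Subsingleton (R ⧸ Ideal.span {a}) := by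
  have htop : Ideal.span {a} = ⊤ := Ideal.span_singleton_eq_top.mpr h
  refine ⟨fun x y => ?_⟩
  obtain ⟨x, rfl⟩ := Ideal.Quotient.mk_surjective x
  obtain ⟨y, rfl⟩ := Ideal.Quotient.mk_surjective y
  rw [Ideal.Quotient.eq, htop]; exact Submodule.mem_top

/-- Normalisation in `k[X]⧸((X-λ)^e)`. -/
lemma exists_unit_normal {k : Type*} [Field k] (lam : k) (e : ℕ)
    (z : Polynomial k ⧸ Ideal.span {(X - C lam) ^ e}) :
    ∃ b : ℕ, b ≤ e ∧ ∃ ψ : (Polynomial k ⧸ Ideal.span {(X - C lam) ^ e}) ≃ₗ[Polynomial k]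
      (Polynomial k ⧸ Ideal.span {(X - C lam) ^ e}),
      ψ z = Ideal.Quotient.mk _ ((X - C lam) ^ b) := by
  obtain ⟨g, rfl⟩ := Ideal.Quotient.mk_surjective z
  by_cases hz : Ideal.Quotient.mk (Ideal.span {(X - C lam) ^ e}) g = 0
  · refine ⟨e, le_rfl, LinearEquiv.refl _ _, ?_⟩
    rw [LinearEquiv.refl_apply, hz]
    symm
    rw [Ideal.Quotient.eq_zero_iff_mem]
    exact Ideal.mem_span_singleton_self _
  have hg : g ≠ 0 := by rintro rfl; simp at hz
  set b := rootMultiplicity lam g with hb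
  have hdvd : (X - C lam) ^ b ∣ g := pow_rootMultiplicity_dvd g lam
  obtain ⟨c, hc⟩ := hdvd
  have hcnd : ¬ (X - C lam) ∣ c := by
    intro ⟨d, hd⟩
    have : (X - C lam) ^ (b + 1) ∣ g := ⟨d, by rw [hc, hd]; ring⟩
    have := (le_rootMultiplicity_iff hg).mpr this
    omega
  have hblt : b < e := by
    by_contra hle
    apply hz
    rw [Ideal.Quotient.eq_zero_iff_mem, Ideal.mem_span_singleton, hc]
    exact Dvd.dvd.mul_right (pow_dvd_pow _ (by omega)) c
  have hcop : IsCoprime ((X - C lam) ^ e) c :=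
    (((irreducible_X_sub_C lam).coprime_iff_not_dvd.mpr hcnd)).pow_left
  obtain ⟨a, b', hab⟩ := hcop
  have hinv : (Ideal.Quotient.mk (Ideal.span {(X - C lam) ^ e}) b') *
      (Ideal.Quotient.mk _ c) = 1 := by
    have : Ideal.Quotient.mk (Ideal.span {(X - C lam) ^ e}) (a * (X - C lam) ^ e + b' * c) = 1 := by
      rw [hab]; simp
    rwa [map_add, map_mul, map_mul, Ideal.Quotient.eq_zero_iff_mem.mpr
      (Ideal.mem_span_singleton_self _), mul_zero, zero_add] at this
  refine ⟨b, hblt.le, mulUnitEquiv _ _ hinv, ?_⟩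
  have happ : ∀ zz, mulUnitEquiv (R := Polynomial k) _ _ hinv zz = (Ideal.Quotient.mk _ b') * zz :=
    fun zz => rfl
  rw [happ]
  rw [hc, map_mul, ← mul_assoc, mul_comm (Ideal.Quotient.mk _ b'), mul_assoc, hinv, mul_one]

/-- Re-indexing a direct sum of cyclic quotients, padding with trivial blocks. -/
lemma dsum_reindex {R : Type*} [CommRing R] {ι κ : Type*} [DecidableEq ι] [DecidableEq κ]
    (q : ι → R) (q' : κ → R) (σ : {i : ι // ¬ IsUnit (q i)} ↪ κ)
    (hmatch : ∀ i, q' (σ i) = q i.1)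
    (hmiss : ∀ j, (∀ i, σ i ≠ j) → IsUnit (q' j)) :
    Nonempty ((⨁ i, R ⧸ Ideal.span {q i}) ≃ₗ[R] ⨁ j, R ⧸ Ideal.span {q' j}) := by
  classical
  have spanEq : ∀ (i : {i : ι // ¬ IsUnit (q i)}),
      (Ideal.span {q i.1} : Ideal R) = Ideal.span {q' (σ i)} := fun i => by rw [hmatch]
  set F : (⨁ i, R ⧸ Ideal.span {q i}) →ₗ[R] ⨁ j, R ⧸ Ideal.span {q' j} :=
    DirectSum.toModule R ι _ (fun i =>
      if h : IsUnit (q i) then 0 else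
        (DirectSum.lof R κ (fun j => R ⧸ Ideal.span {q' j}) (σ ⟨i, h⟩)) ∘ₗ
          (Submodule.quotEquivOfEq _ _ (spanEq ⟨i, h⟩)).toLinearMap) with hF
  set G : (⨁ j, R ⧸ Ideal.span {q' j}) →ₗ[R] ⨁ i, R ⧸ Ideal.span {q i} :=
    DirectSum.toModule R κ _ (fun j =>
      if h : ∃ i, σ i = j then
        (DirectSum.lof R ι (fun i => R ⧸ Ideal.span {q i}) h.choose.1) ∘ₗ
          (Submodule.quotEquivOfEq _ _ (by rw [spanEq h.choose, h.choose_spec])).toLinearMap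
      else 0) with hG
  refine ⟨LinearEquiv.ofLinear F G ?_ ?_⟩
  · apply DirectSum.linearMap_ext
    intro j
    refine LinearMap.ext fun z => ?_
    obtain ⟨r, rfl⟩ := Submodule.Quotient.mk_surjective _ z
    simp only [LinearMap.comp_apply, LinearMap.id_apply, hG, DirectSum.toModule_lof]
    by_cases h : ∃ i, σ i = j
    · rw [dif_pos h]
      simp only [LinearMap.comp_apply, LinearEquiv.coe_toLinearMap,
        Submodule.quotEquivOfEq_mk, hF, DirectSum.toModule_lof]
      rw [dif_neg (by exact h.choose.2 : ¬ IsUnit (q h.choose.1))]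
      simp only [LinearMap.comp_apply, LinearEquiv.coe_toLinearMap, Submodule.quotEquivOfEq_mk]
      have : (⟨h.choose.1, h.choose.2⟩ : {i : ι // ¬ IsUnit (q i)}) = h.choose := rfl
      rw [this, h.choose_spec]
    · rw [dif_neg h]
      haveI := subsingleton_quot_of_isUnit (hmiss j (fun i hi => h ⟨i, hi⟩))
      simp only [LinearMap.zero_apply, map_zero]
      have : (Submodule.Quotient.mk r : R ⧸ Ideal.span {q' j}) = 0 := Subsingleton.elim _ _
      rw [this, map_zero]
  · apply DirectSum.linearMap_ext
    intro i
    refine LinearMap.ext fun z => ?_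
    obtain ⟨r, rfl⟩ := Submodule.Quotient.mk_surjective _ z
    simp only [LinearMap.comp_apply, LinearMap.id_apply, hF, DirectSum.toModule_lof]
    by_cases h : IsUnit (q i)
    · rw [dif_pos h]
      haveI := subsingleton_quot_of_isUnit h
      simp only [LinearMap.zero_apply, map_zero]
      have : (Submodule.Quotient.mk r : R ⧸ Ideal.span {q i}) = 0 := Subsingleton.elim _ _
      rw [this, map_zero]
    · rw [dif_neg h]
      simp only [LinearMap.comp_apply, LinearEquiv.coe_toLinearMap,
        Submodule.quotEquivOfEq_mk, hG, DirectSum.toModule_lof]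
      have hex : ∃ i', σ i' = σ ⟨i, h⟩ := ⟨⟨i, h⟩, rfl⟩
      rw [dif_pos hex]
      have hch : hex.choose = ⟨i, h⟩ := σ.injective hex.choose_spec
      simp only [LinearMap.comp_apply, LinearEquiv.coe_toLinearMap, Submodule.quotEquivOfEq_mk]
      rw [hch]

variable {k : Type*} [Field k] [IsAlgClosed k] [DecidableEq k]

/-- Jordan-type data. -/
abbrev JData (p : Polynomial k) (n : ℕ) : Type _ :=
  Fin n → {a : k // a ∈ p.roots.toFinset} × Fin (n+1) × Fin (n+1)

abbrev JMod (p : Polynomial k) (n : ℕ) (δ : JData p n) : Type _ :=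
  ⨁ i : Fin n, Polynomial k ⧸ Ideal.span {(X - C ((δ i).1.1 : k)) ^ ((δ i).2.1 : ℕ)}

def jVec (p : Polynomial k) (n : ℕ) (δ : JData p n) : JMod p n δ :=
  DFinsupp.equivFunOnFintype.symm fun i =>
    Ideal.Quotient.mk _ ((X - C ((δ i).1.1 : k)) ^ ((δ i).2.2 : ℕ))

def Realizes (p : Polynomial k) (n : ℕ) (x : Matrix (Fin n) (Fin n) k) (v : Fin n → k)
    (δ : JData p n) : Prop :=
  ∃ φ : Module.AEval' (Matrix.toLinAlgEquiv' x) ≃ₗ[Polynomial k] JMod p n δ,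
    φ (Module.AEval'.of _ v) = jVec p n δ

lemma conj_of_realizes {p : Polynomial k} {n : ℕ} {x y : Matrix (Fin n) (Fin n) k}
    {v : Fin n → k} {δ : JData p n}
    (hx : Realizes p n x v δ) (hy : Realizes p n y v δ) :
    ∃ g : Matrix (Fin n) (Fin n) k, IsUnit g ∧ g.mulVec v = v ∧ x = g * y * g⁻¹ := by
  classical
  obtain ⟨φx, hφx⟩ := hx
  obtain ⟨φy, hφy⟩ := hy
  have hx : φx (Module.AEval'.of _ v) = φy (Module.AEval'.of _ v) := by rw [hφx, hφy]
  set χ : Module.AEval' (Matrix.toLinAlgEquiv' y) ≃ₗ[Polynomial k]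
      Module.AEval' (Matrix.toLinAlgEquiv' x) := φy.trans φx.symm with hχ
  set η : (Fin n → k) ≃ₗ[k] (Fin n → k) :=
    ((Module.AEval'.of (Matrix.toLinAlgEquiv' y)).trans (χ.restrictScalars k)).trans
      (Module.AEval'.of (Matrix.toLinAlgEquiv' x)).symm with hη
  have hηapp : ∀ m, η m = (Module.AEval'.of (Matrix.toLinAlgEquiv' x)).symm
      (χ (Module.AEval'.of (Matrix.toLinAlgEquiv' y) m)) := fun m => rfl
  have hcomm : ∀ m, η (Matrix.toLinAlgEquiv' y m) = Matrix.toLinAlgEquiv' x (η m) := by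
    intro m
    rw [hηapp, hηapp]
    rw [← Module.AEval'.X_smul_of, map_smul, Module.AEval'.of_symm_X_smul]
  have hηv : η v = v := by
    rw [hηapp]
    have : χ (Module.AEval'.of (Matrix.toLinAlgEquiv' y) v)
        = Module.AEval'.of (Matrix.toLinAlgEquiv' x) v := by
      rw [hχ, LinearEquiv.trans_apply, ← hx, LinearEquiv.symm_apply_apply]
    rw [this, LinearEquiv.symm_apply_apply]
  set g : Matrix (Fin n) (Fin n) k := LinearMap.toMatrix' (η : (Fin n → k) →ₗ[k] (Fin n → k))
    with hg
  have hmulVec : ∀ m, g.mulVec m = η m := by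
    intro m
    rw [← Matrix.toLin'_apply, hg, Matrix.toLin'_toMatrix']
    rfl
  have hright : g * LinearMap.toMatrix' (η.symm : (Fin n → k) →ₗ[k] (Fin n → k)) = 1 := by
    rw [hg, ← LinearMap.toMatrix'_comp]
    have : (η : (Fin n → k) →ₗ[k] (Fin n → k)) ∘ₗ (η.symm : (Fin n → k) →ₗ[k] (Fin n → k))
        = LinearMap.id := by ext m : 1; simp
    rw [this, LinearMap.toMatrix'_id]
  have hunit : IsUnit g := by
    haveI := invertibleOfRightInverse _ _ hright
    exact isUnit_of_invertible g
  refine ⟨g, hunit, by rw [hmulVec, hηv], ?_⟩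
  have hgy : g * y = x * g := by
    have h1 : (η : (Fin n → k) →ₗ[k] (Fin n → k)) ∘ₗ
        (Matrix.toLinAlgEquiv' y : (Fin n → k) →ₗ[k] (Fin n → k))
        = (Matrix.toLinAlgEquiv' x : (Fin n → k) →ₗ[k] (Fin n → k)) ∘ₗ
          (η : (Fin n → k) →ₗ[k] (Fin n → k)) := by
      refine LinearMap.ext fun m => ?_
      simpa using hcomm m
    have h2 := congrArg LinearMap.toMatrix' h1
    rw [LinearMap.toMatrix'_comp, LinearMap.toMatrix'_comp] at h2
    have h3 : LinearMap.toMatrix'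
        (Matrix.toLinAlgEquiv' y : (Fin n → k) →ₗ[k] (Fin n → k)) = y := by
      have : (Matrix.toLinAlgEquiv' y : (Fin n → k) →ₗ[k] (Fin n → k)) = Matrix.toLin' y := by
        refine LinearMap.ext fun m => ?_
        rw [Matrix.toLin'_apply, Matrix.toLinAlgEquiv'_apply]
      rw [this, LinearMap.toMatrix'_toLin']
    have h4 : LinearMap.toMatrix'
        (Matrix.toLinAlgEquiv' x : (Fin n → k) →ₗ[k] (Fin n → k)) = x := by
      have : (Matrix.toLinAlgEquiv' x : (Fin n → k) →ₗ[k] (Fin n → k)) = Matrix.toLin' x := by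
        refine LinearMap.ext fun m => ?_
        rw [Matrix.toLin'_apply, Matrix.toLinAlgEquiv'_apply]
      rw [this, LinearMap.toMatrix'_toLin']
    rw [h3, h4] at h2
    exact h2
  have hdet : IsUnit g.det := (Matrix.isUnit_iff_isUnit_det g).mp hunit
  rw [hgy, Matrix.mul_assoc, Matrix.mul_nonsing_inv _ hdet, Matrix.mul_one]

set_option maxHeartbeats 1000000 in
lemma exists_realizes {p : Polynomial k} {n : ℕ} (hn : 1 ≤ n) (hmonic : p.Monic)
    (hdeg : p.natDegree = n) (x : Matrix (Fin n) (Fin n) k) (hx : x.charpoly = p)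
    (v : Fin n → k) :
    ∃ δ : JData p n, Realizes p n x v δ := by
  classical
  have hp0 : p ≠ 0 := hmonic.ne_zero
  have haev : Polynomial.aeval (Matrix.toLinAlgEquiv' x) p = 0 := by
    rw [← hx, Polynomial.aeval_algHom_apply Matrix.toLinAlgEquiv' x x.charpoly,
      Matrix.aeval_self_charpoly, map_zero]
  -- every element of the `k[X]`-module is killed by `p`
  have hts : ∀ m : Module.AEval' (Matrix.toLinAlgEquiv' x), p • m = 0 := by
    intro m
    obtain ⟨m', rfl⟩ := (Module.AEval'.of (Matrix.toLinAlgEquiv' x)).surjective m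
    rw [← Module.AEval.of_aeval_smul, haev, zero_smul, map_zero]
  have htor : Module.IsTorsion (Polynomial k) (Module.AEval' (Matrix.toLinAlgEquiv' x)) :=
    fun m => ⟨⟨p, mem_nonZeroDivisors_of_ne_zero hp0⟩, hts m⟩
  obtain ⟨ι, hι, q, hqirr, e, ⟨Φ₀⟩⟩ := Module.equiv_directSum_of_isTorsion htor
  haveI := hι
  haveI : DecidableEq ι := Classical.decEq ι
  -- replace each irreducible by a linear factor
  have hlam : ∀ i, ∃ lam : k, Associated (X - C lam) (q i) := by
    intro i
    have hdeg1 : (q i).degree = 1 := IsAlgClosed.degree_eq_one_of_irreducible _ (hqirr i)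
    obtain ⟨lam, hroot⟩ := IsAlgClosed.exists_root (q i) (by rw [hdeg1]; exact one_ne_zero)
    obtain ⟨c, hc⟩ := dvd_iff_isRoot.mpr hroot
    have hq0 : q i ≠ 0 := (hqirr i).ne_zero
    have hcu : IsUnit c := by
      rcases (hqirr i).isUnit_or_isUnit hc with h | h
      · exact absurd h (Polynomial.not_isUnit_X_sub_C lam)
      · exact h
    exact ⟨lam, ⟨hcu.unit, by rw [IsUnit.unit_spec]; exact hc.symm⟩⟩
  choose lam hlamassoc using hlam
  have spanEq1 : ∀ i, (Polynomial k ∙ q i ^ e i : Submodule (Polynomial k) (Polynomial k))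
      = Ideal.span {(X - C (lam i)) ^ e i} := by
    intro i
    rw [Ideal.submodule_span_eq]
    exact (Ideal.span_singleton_eq_span_singleton.mpr ((hlamassoc i).pow_pow.symm)).symm
      |>.symm
  set Φ₁ := DFinsupp.mapRange.linearEquiv
    (fun i => Submodule.quotEquivOfEq _ _ (spanEq1 i)) with hΦ₁
  set Ψ : Module.AEval' (Matrix.toLinAlgEquiv' x) ≃ₗ[Polynomial k]
      ⨁ i, Polynomial k ⧸ Ideal.span {(X - C (lam i)) ^ e i} := Φ₀.trans Φ₁ with hΨ
  -- dimension count
  haveI hfdblock : ∀ i : ι, Module.Finite k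
      (Polynomial k ⧸ Ideal.span {(X - C (lam i)) ^ e i}) := by
    intro i
    have hne : (X - C (lam i)) ^ e i ≠ 0 := pow_ne_zero _ (X_sub_C_ne_zero (lam i))
    exact Module.Finite.of_basis (AdjoinRoot.powerBasis hne).basis
  have hsum : ∑ i, Module.finrank k (Polynomial k ⧸ Ideal.span {(X - C (lam i)) ^ e i}) = n := by
    have h1 : Module.finrank k (Module.AEval' (Matrix.toLinAlgEquiv' x)) = n := by
      rw [← LinearEquiv.finrank_eq (Module.AEval'.of (Matrix.toLinAlgEquiv' x)),
        Module.finrank_pi, Fintype.card_fin]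
    rw [← Module.finrank_directSum, ← LinearEquiv.finrank_eq (Ψ.restrictScalars k), h1]
  set ι' := {i : ι // ¬ IsUnit ((X - C (lam i)) ^ e i)} with hι'
  have hcard : Fintype.card ι' ≤ n := by
    rw [Fintype.card_subtype]
    calc (Finset.univ.filter fun i => ¬ IsUnit ((X - C (lam i)) ^ e i)).card
        = ∑ i ∈ Finset.univ.filter fun i => ¬ IsUnit ((X - C (lam i)) ^ e i), 1 := by
          simp
      _ ≤ ∑ i ∈ Finset.univ.filter fun i => ¬ IsUnit ((X - C (lam i)) ^ e i),
            Module.finrank k (Polynomial k ⧸ Ideal.span {(X - C (lam i)) ^ e i}) := by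
          refine Finset.sum_le_sum fun i hi => ?_
          have hnu := (Finset.mem_filter.mp hi).2
          haveI : Nontrivial (Polynomial k ⧸ Ideal.span {(X - C (lam i)) ^ e i}) :=
            Ideal.Quotient.nontrivial_iff.mpr (fun htop => hnu (Ideal.span_singleton_eq_top.mp htop))
          exact Module.finrank_pos
      _ ≤ ∑ i, Module.finrank k (Polynomial k ⧸ Ideal.span {(X - C (lam i)) ^ e i}) :=
          Finset.sum_le_sum_of_subset (Finset.filter_subset _ _)
      _ = n := hsum
  obtain ⟨σ⟩ : Nonempty (ι' ↪ Fin n) :=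
    Function.Embedding.nonempty_of_card_le (by simpa using hcard)
  obtain ⟨lam0, hlam0⟩ := IsAlgClosed.exists_root p
    (by rw [degree_eq_natDegree hp0, hdeg]; exact_mod_cast (by omega : n ≠ 0))
  set E : Fin n → ℕ := fun j => if h : ∃ i : ι', σ i = j then e h.choose.1 else 0 with hE
  set L : Fin n → k := fun j => if h : ∃ i : ι', σ i = j then lam h.choose.1 else lam0 with hL
  set q' : Fin n → Polynomial k := fun j => (X - C (L j)) ^ (E j) with hq'
  obtain ⟨Φ₂⟩ := dsum_reindex (fun i => (X - C (lam i)) ^ e i) q' σ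
    (by
      intro i
      have h : ∃ i' : ι', σ i' = σ i := ⟨i, rfl⟩
      have hch : h.choose = i := σ.injective h.choose_spec
      simp only [hq', hE, hL, dif_pos h, hch])
    (by
      intro j hj
      have h : ¬ ∃ i : ι', σ i = j := fun ⟨i, hi⟩ => hj i hi
      simp only [hq', hE, dif_neg h, pow_zero]
      exact isUnit_one)
  set Φ₃ : Module.AEval' (Matrix.toLinAlgEquiv' x) ≃ₗ[Polynomial k]
      ⨁ j, Polynomial k ⧸ Ideal.span {q' j} := Ψ.trans Φ₂ with hΦ₃
  -- normalize the distinguished vector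
  set w := Φ₃ (Module.AEval'.of _ v) with hw
  have hnorm : ∀ j : Fin n, ∃ b : ℕ, b ≤ E j ∧
      ∃ ψ : (Polynomial k ⧸ Ideal.span {q' j}) ≃ₗ[Polynomial k]
        (Polynomial k ⧸ Ideal.span {q' j}),
      ψ (w j) = Ideal.Quotient.mk _ ((X - C (L j)) ^ b) := fun j =>
    exists_unit_normal (L j) (E j) (w j)
  choose b hble ψ hψ using hnorm
  -- each block polynomial divides p
  have hdvdp : ∀ j : Fin n, q' j ∣ p := by
    intro j
    have h0 : p • (DirectSum.lof (Polynomial k) (Fin n)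
        (fun j => Polynomial k ⧸ Ideal.span {q' j}) j (Ideal.Quotient.mk _ 1)) = 0 := by
      have := hts (Φ₃.symm (DirectSum.lof (Polynomial k) (Fin n)
        (fun j => Polynomial k ⧸ Ideal.span {q' j}) j (Ideal.Quotient.mk _ 1)))
      have h2 := congrArg Φ₃ this
      rw [map_smul, LinearEquiv.apply_symm_apply, map_zero] at h2
      exact h2
    have h2 : p • (Ideal.Quotient.mk (Ideal.span {q' j}) 1) = 0 := by
      have h3 := congrFun (congrArg DFunLike.coe h0) j
      rwa [DFinsupp.smul_apply, DirectSum.lof_apply, DFinsupp.zero_apply] at h3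
    have h4 : Ideal.Quotient.mk (Ideal.span {q' j}) p = 0 := by
      have h5 : (Ideal.Quotient.mk (Ideal.span {q' j}) (p • (1 : Polynomial k)))
          = p • Ideal.Quotient.mk (Ideal.span {q' j}) 1 :=
        Submodule.Quotient.mk_smul _ p 1
      rw [smul_eq_mul, mul_one] at h5
      rw [h5, h2]
    rw [Ideal.Quotient.eq_zero_iff_mem, Ideal.mem_span_singleton] at h4
    exact h4
  have hLroot : ∀ j : Fin n, L j ∈ p.roots.toFinset := by
    intro j
    rw [Multiset.mem_toFinset, mem_roots hp0]
    by_cases h : ∃ i : ι', σ i = j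
    · have hEne : E j ≠ 0 := by
        simp only [hE, dif_pos h]
        intro he0
        exact h.choose.2 (by rw [he0, pow_zero]; exact isUnit_one)
      have : (X - C (L j)) ∣ p := dvd_trans (dvd_pow_self _ hEne) (hdvdp j)
      exact dvd_iff_isRoot.mp this
    · simp only [hL, dif_neg h]
      exact hlam0
  have hEle : ∀ j : Fin n, E j ≤ n := by
    intro j
    have := Polynomial.natDegree_le_of_dvd (hdvdp j) hp0
    rwa [hq', natDegree_pow, natDegree_X_sub_C, mul_one, hdeg] at this
  set δ : JData p n := fun j =>
    (⟨L j, hLroot j⟩, ⟨E j, Nat.lt_succ_of_le (hEle j)⟩,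
      ⟨b j, Nat.lt_succ_of_le ((hble j).trans (hEle j))⟩) with hδ
  refine ⟨δ, (Φ₃.trans (DFinsupp.mapRange.linearEquiv ψ) :
    Module.AEval' (Matrix.toLinAlgEquiv' x) ≃ₗ[Polynomial k] JMod p n δ), ?_⟩
  apply DFinsupp.ext
  intro j
  show (DFinsupp.mapRange.linearEquiv ψ) w j
      = Ideal.Quotient.mk (Ideal.span {q' j}) ((X - C (L j)) ^ b j)
  rw [DFinsupp.mapRange.linearEquiv_apply, DFinsupp.mapRange_apply]
  exact hψ j

end Stmt12Aux

end StmtTwelve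

/-- Let `k` be an algebraically closed field and `n ≥ 1`.  Let
`Q₁ = {g ∈ GL_n(k) : g e₁ = e₁}`.  Then for every monic polynomial `p` of degree `n`
with nonzero constant term, the conjugation action of `Q₁` on
`{x ∈ GL_n(k) : charpoly(x) = p}` has finitely many orbits: there is a finite set `S`
of invertible matrices such that every invertible `x` with `charpoly(x) = p` equals
`g x₀ g⁻¹` for some `g ∈ Q₁` and `x₀ ∈ S`. -/
theorem stmt12 {k : Type*} [Field k] [IsAlgClosed k] {n : ℕ} (hn : 1 ≤ n)
    (p : Polynomial k) (hmonic : p.Monic) (hdeg : p.natDegree = n) (h0 : p.coeff 0 ≠ 0) :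
    ∃ S : Finset (Matrix (Fin n) (Fin n) k),
      (∀ x₀ ∈ S, IsUnit x₀) ∧
      ∀ x : Matrix (Fin n) (Fin n) k, IsUnit x → x.charpoly = p →
        ∃ x₀ ∈ S, ∃ g : Matrix (Fin n) (Fin n) k,
          IsUnit g ∧
          g.mulVec (Pi.single (⟨0, hn⟩ : Fin n) (1 : k)) =
            Pi.single (⟨0, hn⟩ : Fin n) (1 : k) ∧
          x = g * x₀ * g⁻¹ := by
  classical
  letI := Classical.decEq k
  set v : Fin n → k := Pi.single (⟨0, hn⟩ : Fin n) (1 : k) with hv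
  set pick : Stmt12Aux.JData p n → Matrix (Fin n) (Fin n) k := fun δ =>
    if h : ∃ x', IsUnit x' ∧ Stmt12Aux.Realizes p n x' v δ then h.choose else 1 with hpick
  refine ⟨Finset.univ.image pick, ?_, ?_⟩
  · intro x₀ hx₀
    obtain ⟨δ, _, rfl⟩ := Finset.mem_image.mp hx₀
    by_cases h : ∃ x', IsUnit x' ∧ Stmt12Aux.Realizes p n x' v δ
    · simpa [hpick, h] using h.choose_spec.1
    · simp [hpick, h]
  · intro x hxu hxc
    obtain ⟨δ, hδ⟩ := Stmt12Aux.exists_realizes hn hmonic hdeg x hxc v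
    have h : ∃ x', IsUnit x' ∧ Stmt12Aux.Realizes p n x' v δ := ⟨x, hxu, hδ⟩
    refine ⟨pick δ, Finset.mem_image.mpr ⟨δ, Finset.mem_univ _, rfl⟩, ?_⟩
    have hps := h.choose_spec
    have hpd : pick δ = h.choose := by simp [hpick, h]
    obtain ⟨g, hg, hgv, hconj⟩ := Stmt12Aux.conj_of_realizes hδ
      (hpd ▸ hps.2 : Stmt12Aux.Realizes p n (pick δ) v δ)
    exact ⟨g, hg, hgv, hconj⟩
end
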